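/- The second Lie algebra cohomology H^2(K_0, ℂ) is one dimensional: every 2-cocycle ω on K_0 is cohomologous to a scalar multiple of the cocycle ω(K_m, K_n) = δ_{m,-n} · m(m²-1)/12, and this cocycle is not a coboundary. -/

import Mathlib

set_option maxHeartbeats 1000000

private noncomputable def hpf (f : ℤ → ℤ → ℂ) : ℕ → ℂ
  | 0 => 0
  | 1 => 0
  | 2 => (f 2 (-2) - 3 * f 2 (-1) - f 1 (-2)) / 4
  | (n+3) => (f 1 ((n:ℤ)+2) - ((n:ℂ)+2) * hpf f (n+2)) / (1 - ((n:ℂ)+2))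

private noncomputable def hqf (f : ℤ → ℤ → ℂ) : ℕ → ℂ
  | 0 => 0
  | 1 => -2 * hpf f 2 - f 2 (-1)
  | 2 => (3 * (-2 * hpf f 2 - f 2 (-1)) - f 1 (-2)) / 2
  | (k+3) => (f 1 (-(k:ℤ)-3) - ((k:ℂ)+4) * hqf f (k+2)) / (-((k:ℂ)+3))

private noncomputable def hhf (f : ℤ → ℤ → ℂ) : ℤ → ℂ :=
  fun z => if 0 ≤ z then hpf f z.toNat else hqf f (-z).toNat

section hhlemmas
variable (f : ℤ → ℤ → ℂ)

private lemma hhf_zero : hhf f 0 = 0 := by simp [hhf, hpf]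
private lemma hhf_one : hhf f 1 = 0 := by simp [hhf, hpf]

private lemma hhf_nonneg (n : ℤ) (h : 0 ≤ n) : hhf f n = hpf f n.toNat := by
  simp [hhf, h]

private lemma hhf_neg (n : ℤ) (h : n < 0) : hhf f n = hqf f (-n).toNat := by
  simp [hhf, not_le.mpr h]

private lemma eqp (n : ℤ) (h : 2 ≤ n) :
    f 1 n = (1 - (n:ℂ)) * hhf f (n+1) + (n:ℂ) * hhf f n := by
  obtain ⟨k, rfl⟩ : ∃ k : ℕ, n = (k:ℤ) + 2 := ⟨(n-2).toNat, by omega⟩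
  rw [hhf_nonneg f _ (by omega), hhf_nonneg f _ (by omega)]
  have h1 : ((k:ℤ)+2).toNat = k + 2 := by omega
  have h2 : ((k:ℤ)+2+1).toNat = k + 3 := by omega
  rw [h1, h2, hpf]
  have hne : (1:ℂ) - ((k:ℂ)+2) ≠ 0 := by
    intro hc; exact Nat.cast_add_one_ne_zero k (by linear_combination -hc)
  push_cast
  field_simp
  ring

private lemma eqn (n : ℤ) (h : n ≤ -2) :
    f 1 n = (1 - (n:ℂ)) * hhf f (n+1) + (n:ℂ) * hhf f n := by
  rcases eq_or_lt_of_le h with heq | hlt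
  · -- n = -2
    subst heq
    rw [hhf_neg f (-2) (by norm_num), show (-2:ℤ)+1 = -1 from rfl,
      hhf_neg f (-1) (by norm_num)]
    norm_num [hqf, show (2:ℤ).toNat = 2 from rfl]
    ring
  · -- n ≤ -3
    obtain ⟨k, rfl⟩ : ∃ k : ℕ, n = -(k:ℤ) - 3 := ⟨(-n-3).toNat, by omega⟩
    rw [hhf_neg f _ (by omega), hhf_neg f _ (by omega)]
    have h1 : (-(-(k:ℤ) - 3)).toNat = k + 3 := by omega
    have h2 : (-(-(k:ℤ) - 3 + 1)).toNat = k + 2 := by omega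
    rw [h1, h2]
    have hne : -((k:ℂ)+3) ≠ 0 := by
      intro hc
      exact Nat.cast_add_one_ne_zero (k+2) (by push_cast; linear_combination -hc)
    have hc1 : ((-(k:ℤ)-3 : ℤ) : ℂ) = -((k:ℂ)+3) := by push_cast; ring
    have hQ : -((k:ℂ)+3) * hqf f (k+3) = f 1 (-(k:ℤ)-3) - ((k:ℂ)+4) * hqf f (k+2) := by
      have haux : ∀ (x y : ℂ), y ≠ 0 → y * (x / y) = x := by
        intro x y hy; field_simp
      rw [hqf]
      exact haux _ _ hne
    rw [hc1]
    linear_combination -hQ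

private lemma eq2 : f 2 (-1) = 3 * hhf f 1 - 2 * hhf f 2 - hhf f (-1) := by
  rw [hhf_one, hhf_nonneg f 2 (by norm_num), hhf_neg f (-1) (by norm_num),
    show ((2:ℤ).toNat) = 2 from rfl]
  norm_num [hqf]

private lemma eq3 : f 2 (-2) = -2 * hhf f 2 - 2 * hhf f (-2) := by
  rw [hhf_nonneg f 2 (by norm_num), hhf_neg f (-2) (by norm_num)]
  norm_num [hqf, hpf, show (2:ℤ).toNat = 2 from rfl]
  ring

end hhlemmas

private noncomputable def gdef (f : ℤ → ℤ → ℂ) : ℤ → ℤ → ℂ :=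
  fun m n => f m n - (((m:ℂ) - (n:ℂ)) * hhf f (m+n) - (m:ℂ) * hhf f m + (n:ℂ) * hhf f n)

section glemmas
variable (f : ℤ → ℤ → ℂ)

private lemma g_N1p (n : ℤ) (h : 2 ≤ n) : gdef f 1 n = 0 := by
  simp only [gdef]
  rw [show (1:ℤ)+n = n+1 by ring, eqp f n h, hhf_one]
  push_cast
  ring

private lemma g_N1n (n : ℤ) (h : n ≤ -2) : gdef f 1 n = 0 := by
  simp only [gdef]
  rw [show (1:ℤ)+n = n+1 by ring, eqn f n h, hhf_one]
  push_cast
  ring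

private lemma g_N2 : gdef f 2 (-1) = 0 := by
  simp only [gdef]
  rw [show (2:ℤ)+(-1) = 1 by ring, eq2 f]
  push_cast
  ring

private lemma g_N3 : gdef f 2 (-2) = 0 := by
  simp only [gdef]
  rw [show (2:ℤ)+(-2) = 0 by ring, eq3 f, hhf_zero]
  push_cast
  ring

end glemmas

private noncomputable def Hfun (f : ℤ → ℤ → ℂ) : ℤ → ℂ :=
  fun z => hhf f z + (if z = 0 then 0 else -(gdef f 1 (-1))/2)

private lemma Hfun_zero (f : ℤ → ℤ → ℂ) : Hfun f 0 = 0 := by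
  simp [Hfun, hhf_zero]

private lemma Hfun_ne (f : ℤ → ℤ → ℂ) (z : ℤ) (h : z ≠ 0) :
    Hfun f z = hhf f z - gdef f 1 (-1)/2 := by
  simp [Hfun, h]
  ring

private lemma core (f : ℤ → ℤ → ℂ)
    (hf0r : ∀ m, f m 0 = 0)
    (hanti : ∀ m n, f m n = - f n m)
    (hcoc : ∀ l m n : ℤ,
      ((l:ℂ)-(m:ℂ)) * f (l+m) n + ((m:ℂ)-(n:ℂ)) * f (m+n) l + ((n:ℂ)-(l:ℂ)) * f (n+l) m
      + ((l:ℂ)+(m:ℂ)) * f l m + ((m:ℂ)+(n:ℂ)) * f m n + ((n:ℂ)+(l:ℂ)) * f n l = 0) :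
    ∃ c : ℂ, ∃ H : ℤ → ℂ, H 0 = 0 ∧ ∀ m n : ℤ,
      f m n = c * (if m = -n then (m:ℂ) * ((m:ℂ)^2 - 1)/12 else 0)
        + (((m:ℂ) - (n:ℂ)) * H (m+n) - (m:ℂ) * H m + (n:ℂ) * H n) := by
  set g : ℤ → ℤ → ℂ := gdef f with hgdef
  -- basic facts
  have hf0l : ∀ n, f 0 n = 0 := by
    intro n; rw [hanti, hf0r, neg_zero]
  have g0r : ∀ m, g m 0 = 0 := by
    intro m
    simp only [hgdef, gdef, add_zero, Int.cast_zero, zero_mul, add_zero, sub_zero, hf0r]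
    ring
  have g0l : ∀ n, g 0 n = 0 := by
    intro n
    simp only [hgdef, gdef, zero_add, Int.cast_zero, zero_mul, hf0l]
    ring
  have ganti : ∀ m n, g m n = - g n m := by
    intro m n
    simp only [hgdef, gdef]
    rw [show n+m = m+n by ring]
    linear_combination hanti m n
  have gdiag : ∀ m, g m m = 0 := by
    intro m
    have := ganti m m
    linear_combination this / 2
  have gcoc : ∀ l m n : ℤ,
      ((l:ℂ)-(m:ℂ)) * g (l+m) n + ((m:ℂ)-(n:ℂ)) * g (m+n) l + ((n:ℂ)-(l:ℂ)) * g (n+l) m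
      + ((l:ℂ)+(m:ℂ)) * g l m + ((m:ℂ)+(n:ℂ)) * g m n + ((n:ℂ)+(l:ℂ)) * g n l = 0 := by
    intro l m n
    have e := hcoc l m n
    simp only [hgdef, gdef]
    rw [show m+n+l = l+m+n by ring, show n+l+m = l+m+n by ring]
    push_cast
    linear_combination e
  have N1p : ∀ n, 2 ≤ n → g 1 n = 0 := fun n h => g_N1p f n h
  have N1n : ∀ n, n ≤ -2 → g 1 n = 0 := fun n h => g_N1n f n h
  have N2 : g 2 (-1) = 0 := g_N2 f
  have N3 : g 2 (-2) = 0 := g_N3 f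
  have N1A : ∀ n, n ≠ -1 → g 1 n = 0 := by
    intro n hn
    rcases (by omega : n ≤ -2 ∨ n = 0 ∨ n = 1 ∨ 2 ≤ n) with h | h | h | h
    · exact N1n n h
    · subst h; exact g0r 1
    · subst h; exact gdiag 1
    · exact N1p n h
  have N1A' : ∀ n : ℤ, n ≠ -1 → g n 1 = 0 := by
    intro n hn
    rw [ganti, N1A n hn, neg_zero]
  -- LA : g n (-1) = 0 for n ≥ 2
  have LA : ∀ n : ℤ, 2 ≤ n → g n (-1) = 0 := by
    refine Int.le_induction N2 ?_
    intro n hn ih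
    have e := gcoc (-1) 1 n
    rw [show ((-1):ℤ)+1 = 0 by ring, show (1:ℤ)+n = n+1 by ring,
      show n+(-1) = n-1 by ring] at e
    have k1 : g 0 n = 0 := g0l n
    have k2 : g (n-1) 1 = 0 := N1A' (n-1) (by omega)
    have k4 : g 1 n = 0 := N1p n hn
    have hne : (1:ℂ) - (n:ℂ) ≠ 0 := by
      have h0 : ((1 - n : ℤ) : ℂ) ≠ 0 := Int.cast_ne_zero.mpr (by omega)
      push_cast at h0; exact fun hc => h0 (by linear_combination hc)
    have key : ((1:ℂ) - (n:ℂ)) * g (n+1) (-1) = 0 := by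
      push_cast at e
      linear_combination e + 2*k1 - ((n:ℂ)+1)*k2 - ((n:ℂ)+1)*k4 - ((n:ℂ)-1)*ih
    rcases mul_eq_zero.mp key with h | h
    · exact absurd h hne
    · exact h
  have LA' : ∀ n : ℤ, 2 ≤ n → g (-1) n = 0 := by
    intro n hn
    rw [ganti, LA n hn, neg_zero]
  -- LB : positive pairs vanish
  have LB : ∀ s : ℕ, ∀ m n : ℤ, 1 ≤ m → 1 ≤ n → m + n = (s:ℤ) → g m n = 0 := by
    intro s
    induction s using Nat.strong_induction_on with
    | _ s IH =>
      intro m n hm hn hs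
      rcases eq_or_lt_of_le hm with h1 | h1
      · rw [← h1]; exact N1A n (by omega)
      rcases eq_or_lt_of_le hn with h2 | h2
      · rw [← h2]; exact N1A' m (by omega)
      by_cases hmn : m = n
      · rw [hmn]; exact gdiag n
      have e := gcoc (-1) m n
      rw [show ((-1):ℤ)+m = m-1 by ring, show n+(-1) = n-1 by ring] at e
      have k1 : g (m-1) n = 0 := IH (s-1) (by omega) (m-1) n (by omega) hn (by omega)
      have k2 : g (m+n) (-1) = 0 := LA (m+n) (by omega)
      have k3 : g (n-1) m = 0 := IH (s-1) (by omega) (n-1) m (by omega) hm (by omega)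
      have k4 : g (-1) m = 0 := LA' m (by omega)
      have k5 : g n (-1) = 0 := LA n (by omega)
      have hne : (m:ℂ) + (n:ℂ) ≠ 0 := by
        have h0 : ((m + n : ℤ) : ℂ) ≠ 0 := Int.cast_ne_zero.mpr (by omega)
        push_cast at h0; exact h0
      have key : ((m:ℂ) + (n:ℂ)) * g m n = 0 := by
        push_cast at e
        linear_combination e + (1+(m:ℂ))*k1 - ((m:ℂ)-(n:ℂ))*k2 - ((n:ℂ)+1)*k3
          + (1-(m:ℂ))*k4 + (1-(n:ℂ))*k5
      rcases mul_eq_zero.mp key with h | h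
      · exact absurd h hne
      · exact h
  have LB' : ∀ m n : ℤ, 1 ≤ m → 1 ≤ n → g m n = 0 := fun m n hm hn =>
    LB (m+n).toNat m n hm hn (by omega)
  -- LC0 : g (-1) (-n) = 0 for n ≥ 2
  have LC0 : ∀ n : ℤ, 2 ≤ n → g (-1) (-n) = 0 := by
    refine Int.le_induction ?_ ?_
    · have e := gcoc (-2) (-1) 1
      rw [show ((-2):ℤ)+(-1) = -3 by ring, show ((-1):ℤ)+1 = 0 by ring,
        show (1:ℤ)+(-2) = -1 by ring] at e
      have k1 : g (-3) 1 = 0 := N1A' (-3) (by omega)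
      have k2 : g 0 (-2) = 0 := g0l (-2)
      have k3 : g (-1) (-1) = 0 := gdiag (-1)
      have k5 : g 1 (-2) = 0 := N1n (-2) (by omega)
      have key : (-3:ℂ) * g (-2) (-1) = 0 := by
        push_cast at e
        linear_combination e + k1 + 2*k2 - 3*k3 + k5
      have h := (mul_eq_zero.mp key).resolve_left (by norm_num)
      rw [ganti, h, neg_zero]
    · intro n hn ih
      have e := gcoc (-(n+1)) (-1) 1
      rw [show (-(n+1))+(-1) = -n-2 by ring, show ((-1):ℤ)+1 = 0 by ring,
        show (1:ℤ)+(-(n+1)) = -n by ring] at e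
      have k1 : g (-n-2) 1 = 0 := N1A' (-n-2) (by omega)
      have k2 : g 0 (-(n+1)) = 0 := g0l _
      have k3 : g (-n) (-1) = 0 := by rw [ganti, ih, neg_zero]
      have k5 : g 1 (-(n+1)) = 0 := N1n _ (by omega)
      have hne : -(n:ℂ) - 2 ≠ 0 := by
        have h0 : ((-n - 2 : ℤ) : ℂ) ≠ 0 := Int.cast_ne_zero.mpr (by omega)
        push_cast at h0; exact fun hc => h0 (by linear_combination hc)
      have key : (-(n:ℂ) - 2) * g (-(n+1)) (-1) = 0 := by
        push_cast at e
        linear_combination e + (n:ℂ)*k1 + 2*k2 - ((n:ℂ)+2)*k3 + (n:ℂ)*k5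
      have h := (mul_eq_zero.mp key).resolve_left hne
      rw [ganti, h, neg_zero]
  have LC0' : ∀ n : ℤ, n ≤ -2 → g (-1) n = 0 := by
    intro n hn
    have := LC0 (-n) (by omega)
    rwa [neg_neg] at this
  -- LC : negative pairs vanish
  have LC : ∀ s : ℕ, ∀ m n : ℤ, m ≤ -1 → n ≤ -1 → m + n = -(s:ℤ) → g m n = 0 := by
    intro s
    induction s using Nat.strong_induction_on with
    | _ s IH =>
      intro m n hm hn hs
      rcases eq_or_lt_of_le hm with h1 | h1
      · rw [h1]
        rcases eq_or_lt_of_le hn with h2 | h2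
        · rw [h2]; exact gdiag (-1)
        · exact LC0' n (by omega)
      rcases eq_or_lt_of_le hn with h2 | h2
      · rw [h2, ganti, LC0' m (by omega), neg_zero]
      by_cases hmn : m = n
      · rw [hmn]; exact gdiag n
      have e := gcoc m n 1
      rw [show n+(1:ℤ) = n+1 by ring, show (1:ℤ)+m = m+1 by ring] at e
      have k1 : g (m+n) 1 = 0 := N1A' (m+n) (by omega)
      have k2 : g (n+1) m = 0 := IH (s-1) (by omega) (n+1) m (by omega) (by omega) (by omega)
      have k3 : g (m+1) n = 0 := IH (s-1) (by omega) (m+1) n (by omega) (by omega) (by omega)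
      have k4 : g n 1 = 0 := N1A' n (by omega)
      have k5 : g 1 m = 0 := N1n m (by omega)
      have hne : (m:ℂ) + (n:ℂ) ≠ 0 := by
        have h0 : ((m + n : ℤ) : ℂ) ≠ 0 := Int.cast_ne_zero.mpr (by omega)
        push_cast at h0; exact h0
      have key : ((m:ℂ) + (n:ℂ)) * g m n = 0 := by
        push_cast at e
        linear_combination e - ((m:ℂ)-(n:ℂ))*k1 - ((n:ℂ)-1)*k2 - (1-(m:ℂ))*k3
          - ((n:ℂ)+1)*k4 - (1+(m:ℂ))*k5
      rcases mul_eq_zero.mp key with h | h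
      · exact absurd h hne
      · exact h
  have LC' : ∀ m n : ℤ, m ≤ -1 → n ≤ -1 → g m n = 0 := fun m n hm hn =>
    LC (-(m+n)).toNat m n hm hn (by omega)
  -- Base1 : g (-a) 2 = 0 for a ≥ 3
  have Base1 : ∀ a : ℤ, 3 ≤ a → g (-a) 2 = 0 := by
    refine Int.le_induction ?_ ?_
    · have e := gcoc (-2) (-1) 2
      rw [show ((-2):ℤ)+(-1) = -3 by ring, show ((-1):ℤ)+2 = 1 by ring,
        show (2:ℤ)+(-2) = 0 by ring] at e
      have k1 : g 1 (-2) = 0 := N1n (-2) (by omega)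
      have k2 : g 0 (-1) = 0 := g0l (-1)
      have k3 : g (-2) (-1) = 0 := LC' (-2) (-1) (by omega) (by omega)
      have k4 : g (-1) 2 = 0 := LA' 2 (by omega)
      show g (-3) 2 = 0
      push_cast at e
      linear_combination -e - 3*k1 + 4*k2 - 3*k3 + k4
    · intro a ha ih
      have e := gcoc (-a) (-1) 2
      rw [show (-a)+(-1) = -a-1 by ring, show ((-1):ℤ)+2 = 1 by ring,
        show (2:ℤ)+(-a) = 2-a by ring] at e
      have k1 : g 1 (-a) = 0 := N1n (-a) (by omega)
      have k2 : g (2-a) (-1) = 0 := LC' (2-a) (-1) (by omega) (by omega)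
      have k3 : g (-a) (-1) = 0 := LC' (-a) (-1) (by omega) (by omega)
      have k4 : g (-1) 2 = 0 := LA' 2 (by omega)
      have k6 : g 2 (-a) = 0 := by rw [ganti, ih, neg_zero]
      have hne : (1:ℂ) - (a:ℂ) ≠ 0 := by
        have h0 : ((1 - a : ℤ) : ℂ) ≠ 0 := Int.cast_ne_zero.mpr (by omega)
        push_cast at h0; exact fun hc => h0 (by linear_combination hc)
      have key : ((1:ℂ) - (a:ℂ)) * g (-a-1) 2 = 0 := by
        push_cast at e
        linear_combination e + 3*k1 - ((a:ℂ)+2)*k2 + ((a:ℂ)+1)*k3 - k4 + ((a:ℂ)-2)*k6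
      have h := (mul_eq_zero.mp key).resolve_left hne
      rw [show -(a+1) = -a-1 by ring]
      exact h
  -- Base2 : g (-a) (a+1) = 0 for a ≥ 1
  have Base2 : ∀ a : ℤ, 1 ≤ a → g (-a) (a+1) = 0 := by
    refine Int.le_induction ?_ ?_
    · exact LA' 2 (by omega)
    · intro a ha ih
      have e := gcoc (-a-1) 1 (a+1)
      rw [show (-a-1)+1 = -a by ring, show (1:ℤ)+(a+1) = a+2 by ring,
        show (a+1)+(-a-1) = 0 by ring] at e
      have k2 : g 0 1 = 0 := g0l 1
      have k3 : g (-a-1) 1 = 0 := N1A' (-a-1) (by omega)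
      have k4 : g 1 (a+1) = 0 := N1p (a+1) (by omega)
      have hne : -(a:ℂ) ≠ 0 := by
        have h0 : ((-a : ℤ) : ℂ) ≠ 0 := Int.cast_ne_zero.mpr (by omega)
        push_cast at h0; exact h0
      have key : (-(a:ℂ)) * g (a+2) (-a-1) = 0 := by
        push_cast at e
        linear_combination e + ((a:ℂ)+2)*ih - (2*(a:ℂ)+2)*k2 + (a:ℂ)*k3 - ((a:ℂ)+2)*k4
      have h := (mul_eq_zero.mp key).resolve_left hne
      rw [show -(a+1) = -a-1 by ring, show a+1+1 = a+2 by ring, ganti, h, neg_zero]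
  -- single step lemma
  have ST : ∀ a b : ℤ, 2 ≤ a → 2 ≤ b → b ≠ a - 1 → b ≠ a →
      (∀ b', 1 ≤ b' → b' ≠ a - 1 → g (1-a) b' = 0) → g (-a) b = 0 → g (-a) (b+1) = 0 := by
    intro a b ha hb hba1 hba hfact hin
    have e := gcoc 1 (-a) b
    rw [show (1:ℤ)+(-a) = 1-a by ring, show (-a)+b = b-a by ring] at e
    have k1 : g (1-a) b = 0 := hfact b (by omega) hba1
    have k2 : g (b-a) 1 = 0 := N1A' (b-a) (by omega)
    have k3 : g 1 (-a) = 0 := N1n (-a) (by omega)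
    have k4 : g b 1 = 0 := N1A' b (by omega)
    have hne : (b:ℂ) - 1 ≠ 0 := by
      have h0 : ((b - 1 : ℤ) : ℂ) ≠ 0 := Int.cast_ne_zero.mpr (by omega)
      push_cast at h0; exact h0
    have key : ((b:ℂ) - 1) * g (b+1) (-a) = 0 := by
      push_cast at e
      linear_combination e - (1+(a:ℂ))*k1 + ((a:ℂ)+(b:ℂ))*k2 - (1-(a:ℂ))*k3
        - ((b:ℂ)-(a:ℂ))*hin - ((b:ℂ)+1)*k4
    have h := (mul_eq_zero.mp key).resolve_left hne
    rw [ganti, h, neg_zero]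
  -- SL : full fixed-a statement
  have SL : ∀ a : ℤ, 2 ≤ a → (∀ b', 1 ≤ b' → b' ≠ a - 1 → g (1-a) b' = 0) →
      ∀ b, 1 ≤ b → b ≠ a → g (-a) b = 0 := by
    intro a ha hfact b hb hba
    rcases (by omega : b = 1 ∨ (2 ≤ b ∧ b ≤ a - 1) ∨ a + 1 ≤ b) with h | h | h
    · rw [h]; exact N1A' (-a) (by omega)
    · obtain ⟨hb2, hba1⟩ := h
      have inner : ∀ j : ℕ, ∀ bb : ℤ, bb = 2 + j → bb ≤ a - 1 → g (-a) bb = 0 := by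
        intro j
        induction j with
        | zero =>
          intro bb hbb hle
          have : bb = 2 := by push_cast at hbb; omega
          rw [this]
          exact Base1 a (by omega)
        | succ j ihj =>
          intro bb hbb hle
          have hprev : g (-a) (2 + (j:ℤ)) = 0 := ihj (2+(j:ℤ)) rfl (by push_cast at hbb; omega)
          have hst := ST a (2+(j:ℤ)) (by omega) (by omega) (by push_cast at hbb; omega)
            (by push_cast at hbb; omega) hfact hprev
          have harg : bb = (2+(j:ℤ)) + 1 := by push_cast at hbb; omega
          rw [harg]; exact hst
      exact inner (b-2).toNat b (by omega) hba1
    · have inner2 : ∀ j : ℕ, g (-a) (a + 1 + (j:ℤ)) = 0 := by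
        intro j
        induction j with
        | zero => simpa using Base2 a (by omega)
        | succ j ihj =>
          have hst := ST a (a+1+(j:ℤ)) (by omega) (by omega) (by omega) (by omega) hfact ihj
          have harg : a + 1 + ((j:ℕ)+1 : ℤ) = (a+1+(j:ℤ)) + 1 := by ring
          rw [show ((((j+1):ℕ)):ℤ) = ((j:ℕ):ℤ)+1 by push_cast; ring, harg]
          exact hst
      have h2 := inner2 (b - a - 1).toNat
      rw [show a+1+(((b-a-1).toNat):ℤ) = b by omega] at h2
      exact h2
  -- LD : all mixed pairs
  have LD : ∀ a : ℤ, 2 ≤ a → ∀ b : ℤ, 1 ≤ b → b ≠ a → g (-a) b = 0 := by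
    refine Int.le_induction ?_ ?_
    · refine SL 2 (by norm_num) ?_
      intro b' hb' hb1
      rw [show (1:ℤ)-2 = -1 by norm_num]
      exact LA' b' (by omega)
    · intro a ha ih
      refine SL (a+1) (by omega) ?_
      intro b' hb' hb1
      rw [show (1:ℤ)-(a+1) = -a by ring]
      exact ih b' hb' (by omega)
  -- Lvl : everything off level 0 vanishes
  have Lvl : ∀ m n : ℤ, m + n ≠ 0 → g m n = 0 := by
    intro m n hmn
    rcases (by omega : m = 0 ∨ n = 0 ∨ (1 ≤ m ∧ 1 ≤ n) ∨ (m ≤ -1 ∧ n ≤ -1)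
      ∨ (m ≤ -1 ∧ 1 ≤ n) ∨ (1 ≤ m ∧ n ≤ -1)) with h|h|h|h|h|h
    · rw [h]; exact g0l n
    · rw [h]; exact g0r m
    · exact LB' m n h.1 h.2
    · exact LC' m n h.1 h.2
    · obtain ⟨hm, hn⟩ := h
      rcases (by omega : m = -1 ∨ m ≤ -2) with h1 | h1
      · rw [h1]; exact LA' n (by omega)
      · have hD := LD (-m) (by omega) n hn (by omega)
        rwa [neg_neg] at hD
    · obtain ⟨hm, hn⟩ := h
      rw [ganti]
      rcases (by omega : n = -1 ∨ n ≤ -2) with h1 | h1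
      · rw [h1, LA' m (by omega), neg_zero]
      · have hD := LD (-n) (by omega) m hm (by omega)
        rw [neg_neg] at hD
        rw [hD, neg_zero]
  -- level 0 analysis
  have T1 : ∀ m : ℤ, ((1:ℂ)+(m:ℂ)) * g 1 m = 0 := by
    intro m
    by_cases h : m = -1
    · rw [h]; push_cast; ring
    · rw [N1A m h, mul_zero]
  have T2 : ∀ m : ℤ, (m:ℂ) * g (-(m+1)) 1 = 0 := by
    intro m
    by_cases h : m = 0
    · rw [h]; push_cast; ring
    · rw [N1A' (-(m+1)) (by omega), mul_zero]
  have L01 : ∀ m : ℤ, ((1:ℂ)-(m:ℂ)) * g (m+1) (-(m+1)) - (2*(m:ℂ)+1) * g 1 (-1)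
      + ((m:ℂ)+2) * g m (-m) = 0 := by
    intro m
    have e := gcoc 1 m (-1-m)
    rw [show (1:ℤ)+m = m+1 by ring, show m+(-1-m) = -1 by ring,
      show (-1-m)+(1:ℤ) = -m by ring, show (-1:ℤ)-m = -(m+1) by ring] at e
    have k5 : g m (-(m+1)) = 0 := Lvl m (-(m+1)) (by omega)
    have A1 := ganti 1 (-1)
    have A2 := ganti m (-m)
    push_cast at e
    linear_combination e - (2*(m:ℂ)+1)*A1 + ((m:ℂ)+2)*A2 - T1 m + k5 + T2 m
  -- closed form on level 0
  have PhiPos : ∀ m : ℤ, 2 ≤ m →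
      g m (-m) = g 1 (-1) * (4*(m:ℂ) - (m:ℂ)^3)/3 := by
    refine Int.le_induction ?_ ?_
    · rw [N3]; norm_num
    · intro m hm ih
      have hne : (1:ℂ) - (m:ℂ) ≠ 0 := by
        have h0 : ((1 - m : ℤ) : ℂ) ≠ 0 := Int.cast_ne_zero.mpr (by omega)
        push_cast at h0; exact fun hc => h0 (by linear_combination hc)
      refine mul_left_cancel₀ hne ?_
      push_cast
      linear_combination L01 m - ((m:ℂ)+2)*ih
  have Phi : ∀ m : ℤ, g m (-m) = g 1 (-1) * (4*(m:ℂ) - (m:ℂ)^3)/3 := by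
    intro m
    rcases (by omega : m = 0 ∨ m = 1 ∨ 2 ≤ m ∨ m ≤ -1) with h | h | h | h
    · rw [h, neg_zero, g0l 0]; norm_num
    · rw [h]; norm_num
    · exact PhiPos m h
    · rcases (by omega : m = -1 ∨ 2 ≤ -m) with h1 | h1
      · rw [h1, neg_neg, ganti (-1) 1]
        push_cast
        ring
      · have hp := PhiPos (-m) h1
        rw [neg_neg] at hp
        push_cast at hp
        linear_combination ganti m (-m) - hp
  -- assembly
  refine ⟨-4 * g 1 (-1), Hfun f, Hfun_zero f, ?_⟩
  intro m n
  by_cases hmn : m = -n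
  · rw [if_pos hmn]
    obtain rfl : n = -m := by omega
    have hg : f m (-m) = g m (-m)
        + (((m:ℂ) - ((-m:ℤ):ℂ)) * hhf f (m + -m) - (m:ℂ) * hhf f m + ((-m:ℤ):ℂ) * hhf f (-m)) := by
      simp only [hgdef, gdef]; ring
    rw [hg, Phi m, show m + -m = 0 by ring, hhf_zero]
    by_cases hm0 : m = 0
    · subst hm0
      rw [show (-(0:ℤ)) = 0 by ring, Hfun_zero, hhf_zero]
      push_cast
      ring
    · rw [Hfun_ne f m hm0, Hfun_ne f (-m) (by omega), Hfun_zero f, ← hgdef]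
      push_cast
      ring
  · rw [if_neg hmn]
    have hLvl : g m n = 0 := Lvl m n (by omega)
    have hg : f m n = g m n
        + (((m:ℂ) - (n:ℂ)) * hhf f (m+n) - (m:ℂ) * hhf f m + (n:ℂ) * hhf f n) := by
      simp only [hgdef, gdef]; ring
    rw [hg, hLvl, Hfun_ne f (m+n) (by omega)]
    by_cases hm0 : m = 0
    · subst hm0
      rw [Hfun_zero]
      by_cases hn0 : n = 0
      · subst hn0; rw [Hfun_zero, hhf_zero]; push_cast; ring
      · rw [Hfun_ne f n hn0, ← hgdef]
        rw [show (0:ℤ) + n = n by ring]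
        push_cast
        ring
    · rw [Hfun_ne f m hm0]
      by_cases hn0 : n = 0
      · subst hn0
        rw [Hfun_zero, hhf_zero, show m + 0 = m by ring, ← hgdef]
        push_cast
        ring
      · rw [Hfun_ne f n hn0, ← hgdef]
        ring


/-- `H²(K₀, ℂ)` is one dimensional: every 2-cocycle is cohomologous to a scalar multiple of
the Virasoro cocycle `ω (K m) (K n) = δ_{m,-n} m(m²-1)/12`, and that cocycle is not a
coboundary. -/
theorem stmt5 (V : Type) [LieRing V] [LieAlgebra ℂ V] (K : ℤ → V)
    (hK0 : K 0 = 0)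
    (hbr : ∀ m n : ℤ, m ≠ -n →
      ⁅K m, K n⁆ = ((m : ℂ) - n) • K (m + n) - (m : ℂ) • K m + (n : ℂ) • K n)
    (hbr' : ∀ m : ℤ, ⁅K m, K (-m)⁆ = -((m : ℂ) • K m) - (m : ℂ) • K (-m))
    (b : Module.Basis {n : ℤ // n ≠ 0} ℂ V) (hb : ∀ n : {n : ℤ // n ≠ 0}, b n = K n.1)
    (ω : V →ₗ[ℂ] V →ₗ[ℂ] ℂ)
    (hanti : ∀ x y : V, ω x y = - ω y x)
    (hcoc : ∀ x y z : V, ω ⁅x, y⁆ z + ω ⁅y, z⁆ x + ω ⁅z, x⁆ y = 0) :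
    (∃ c : ℂ, ∃ μ : V →ₗ[ℂ] ℂ, ∀ m n : ℤ,
      ω (K m) (K n) =
        c * (if m = -n then (m : ℂ) * ((m : ℂ) ^ 2 - 1) / 12 else 0) + μ ⁅K m, K n⁆) ∧
    ¬ ∃ μ : V →ₗ[ℂ] ℂ, ∀ m n : ℤ,
      (if m = -n then (m : ℂ) * ((m : ℂ) ^ 2 - 1) / 12 else 0) = μ ⁅K m, K n⁆ := by
  -- unified bracket formula
  have hbr2 : ∀ m n : ℤ,
      ⁅K m, K n⁆ = ((m:ℂ) - (n:ℂ)) • K (m+n) - (m:ℂ) • K m + (n:ℂ) • K n := by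
    intro m n
    by_cases h : m = -n
    · subst h
      have h2 := hbr' (-n)
      rw [neg_neg] at h2
      rw [h2, show -n + n = 0 by ring, hK0, smul_zero]
      push_cast
      module
    · exact hbr m n h
  -- bracket under a linear functional
  have hmu : ∀ (μ : V →ₗ[ℂ] ℂ) (m n : ℤ),
      μ ⁅K m, K n⁆ = ((m:ℂ) - (n:ℂ)) * μ (K (m+n)) - (m:ℂ) * μ (K m) + (n:ℂ) * μ (K n) := by
    intro μ m n
    rw [hbr2 m n]
    simp [map_add, map_sub, map_smul, smul_eq_mul]
  constructor
  · -- existence part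
    have hf0r : ∀ m : ℤ, ω (K m) (K 0) = 0 := by
      intro m; rw [hK0]; exact map_zero _
    have hanti' : ∀ m n : ℤ, ω (K m) (K n) = -(ω (K n) (K m)) := fun m n => hanti _ _
    have hcocf : ∀ l m n : ℤ,
        ((l:ℂ)-(m:ℂ)) * ω (K (l+m)) (K n) + ((m:ℂ)-(n:ℂ)) * ω (K (m+n)) (K l)
        + ((n:ℂ)-(l:ℂ)) * ω (K (n+l)) (K m) + ((l:ℂ)+(m:ℂ)) * ω (K l) (K m)
        + ((m:ℂ)+(n:ℂ)) * ω (K m) (K n) + ((n:ℂ)+(l:ℂ)) * ω (K n) (K l) = 0 := by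
      intro l m n
      have e := hcoc (K l) (K m) (K n)
      rw [hbr2 l m, hbr2 m n, hbr2 n l] at e
      simp only [map_add, map_sub, map_smul, LinearMap.add_apply, LinearMap.sub_apply,
        LinearMap.smul_apply, smul_eq_mul] at e
      linear_combination e + (m:ℂ) * hanti (K l) (K m) + (n:ℂ) * hanti (K m) (K n)
        + (l:ℂ) * hanti (K n) (K l)
    obtain ⟨c, H, hH0, hcore⟩ := core (fun m n => ω (K m) (K n)) hf0r hanti' hcocf
    refine ⟨c, b.constr ℂ (fun i => H i.1), ?_⟩
    have hμK : ∀ j : ℤ, (b.constr ℂ (fun i => H i.1)) (K j) = H j := by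
      intro j
      by_cases hj : j = 0
      · subst hj; rw [hK0, map_zero, hH0]
      · rw [show K j = b ⟨j, hj⟩ from (hb ⟨j, hj⟩).symm, Module.Basis.constr_basis]
    intro m n
    rw [hmu _ m n, hμK, hμK, hμK]
    exact hcore m n
  · -- the Virasoro cocycle is not a coboundary
    rintro ⟨μ, hμ2⟩
    have E1 := hμ2 1 (-1)
    have E2 := hμ2 2 (-1)
    have E3 := hμ2 1 (-2)
    have E4 := hμ2 2 (-2)
    rw [hmu μ 1 (-1), show (1:ℤ) + (-1) = 0 by ring, hK0, map_zero] at E1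
    rw [hmu μ 2 (-1), show (2:ℤ) + (-1) = 1 by ring] at E2
    rw [hmu μ 1 (-2), show (1:ℤ) + (-2) = -1 by ring] at E3
    rw [hmu μ 2 (-2), show (2:ℤ) + (-2) = 0 by ring, hK0, map_zero] at E4
    norm_num at E1 E2 E3 E4
    have : (1:ℂ)/2 = 0 := by linear_combination E4 - 2*E1 - E2 - E3
    norm_num at this
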